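/- (Remark 2.2) Fix any adjacency matrix A ∈ 𝒜 and let I be the rate function associated with A. Then for every m ∈ P(Δ°), I(m) ≤ tilde I(m). -/

import Mathlib

open MeasureTheory Filter Set
open scoped ENNReal NNReal

noncomputable section

/-- The probability simplex `P(Δ°)`, identified with the standard simplex in `ℝ^d`. -/
def PD (d : ℕ) : Set (Fin d → ℝ) := stdSimplex ℝ (Fin d)

/-- ℓ¹ norm on `ℝ^d`. -/
def l1 {d : ℕ} (v : Fin d → ℝ) : ℝ := ∑ x, |v x|

/-- Transition probability kernels on `Δ°` (row-stochastic matrices). -/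
def IsKernel {d : ℕ} (K : Matrix (Fin d) (Fin d) ℝ) : Prop :=
  ∀ x, (∀ y, 0 ≤ K x y) ∧ (∑ y, K x y) = 1

/-- Adjacency matrix: entries are 0 or 1. -/
def IsAdjacency {d : ℕ} (A : Matrix (Fin d) (Fin d) ℝ) : Prop :=
  ∀ x y, A x y = 0 ∨ A x y = 1

/-- Irreducible adjacency matrix: for each `x, y` some positive power has positive `(x,y)` entry. -/
def IsIrreducibleAdj {d : ℕ} (A : Matrix (Fin d) (Fin d) ℝ) : Prop :=
  IsAdjacency A ∧ ∀ x y, ∃ k : ℕ, 0 < (A ^ (k + 1)) x y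

/-- `A ∈ 𝒜`: `A` is an adjacency matrix and `A x y = 0` forces `G m x y = 0` on the simplex. -/
def MemA {d : ℕ} (G : (Fin d → ℝ) → Matrix (Fin d) (Fin d) ℝ)
    (A : Matrix (Fin d) (Fin d) ℝ) : Prop :=
  IsAdjacency A ∧ ∀ x y, A x y = 0 → ∀ m ∈ PD d, G m x y = 0

open Classical in
/-- Relative entropy `R(ν ‖ μ)` of probability vectors on a finite type, valued in `ℝ≥0∞`. -/
def relEnt {S : Type*} [Fintype S] (ν μ : S → ℝ) : ℝ≥0∞ :=
  if ∀ s, μ s = 0 → ν s = 0 then ENNReal.ofReal (∑ s, ν s * Real.log (ν s / μ s)) else ⊤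

/-- `η ∈ U(m)` together with the (unique) solution `M` of the equation (P3). -/
structure Admissible {d : ℕ} (A : Matrix (Fin d) (Fin d) ℝ)
    (G : (Fin d → ℝ) → Matrix (Fin d) (Fin d) ℝ) (m : Fin d → ℝ)
    (η : ℝ → Fin d → Fin d → ℝ) (M : ℝ → Fin d → ℝ) : Prop where
  meas : ∀ x y, Measurable fun s => η s x y
  prob : ∀ s, 0 ≤ s → (∀ x y, 0 ≤ η s x y) ∧ (∑ x, ∑ y, η s x y) = 1
  p1 : ∀ x y, A x y = 0 → ∀ t, 0 ≤ t → (∫ s in (0:ℝ)..t, η s x y) = 0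
  p2 : ∀ᵐ s ∂(volume.restrict (Ici (0:ℝ))), ∀ x, (∑ y, η s x y) = ∑ y, η s y x
  contM : Continuous M
  sol : ∀ t, 0 ≤ t → ∀ x,
    M t x = m x - (∫ s in (0:ℝ)..t, ∑ y, η s x y) + ∫ s in (0:ℝ)..t, M s x
  memM : ∀ t, 0 ≤ t → M t ∈ PD d
  exT : ∃ T : ℝ → Fin d → Fin d → ℝ, Continuous T ∧
    (∀ s t, 0 ≤ s → 0 ≤ t → (∑ x, ∑ y, |T t x y - T s x y|) ≤ 2 * |t - s|) ∧
    ∀ t, 0 ≤ t →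
      (∀ x y, 0 ≤ T t x y) ∧ (∀ x, (∑ y, T t x y) = M t x) ∧
      (∀ y, (∑ x, T t x y) = M t y) ∧ (∀ x y, A x y = 0 → T t x y = 0)

/-- The discounted relative-entropy cost of a control `η` with associated trajectory `M`. -/
def cost {d : ℕ} (G : (Fin d → ℝ) → Matrix (Fin d) (Fin d) ℝ)
    (η : ℝ → Fin d → Fin d → ℝ) (M : ℝ → Fin d → ℝ) : ℝ≥0∞ :=
  ∫⁻ s in Ici (0:ℝ), ENNReal.ofReal (Real.exp (-s)) *
    relEnt (fun xy : Fin d × Fin d => η s xy.1 xy.2)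
      (fun xy : Fin d × Fin d => (∑ y, η s xy.1 y) * G (M s) xy.1 xy.2)

/-- The rate function `I` associated with the adjacency matrix `A`. -/
def rateI {d : ℕ} (A : Matrix (Fin d) (Fin d) ℝ)
    (G : (Fin d → ℝ) → Matrix (Fin d) (Fin d) ℝ) (m : Fin d → ℝ) : ℝ≥0∞ :=
  ⨅ (η : ℝ → Fin d → Fin d → ℝ) (M : ℝ → Fin d → ℝ) (_ : Admissible A G m η M),
    cost G η M

/-- Extended-real logarithm of an extended nonnegative real. -/
def elog (x : ℝ≥0∞) : EReal :=
  if x = 0 then ⊥ else if x = ⊤ then ⊤ else ((Real.log x.toReal : ℝ) : EReal)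

/-- Assumption L (Lipschitz continuity), together with the standing requirement that
`G` maps the simplex into transition kernels. -/
def AssumptionL {d : ℕ} (G : (Fin d → ℝ) → Matrix (Fin d) (Fin d) ℝ) : Prop :=
  (∀ m ∈ PD d, IsKernel (G m)) ∧
  ∃ LG : ℝ, 0 < LG ∧ ∀ m ∈ PD d, ∀ m' ∈ PD d,
    (∑ x, ∑ y, |G m x y - G m' x y|) ≤ LG * l1 (fun x => m x - m' x)

/-- `tilde I(m) = inf { R(γ ‖ m ⊗ G(m)) : γ has both marginals equal to m }`. -/
def tildeI {d : ℕ} (G : (Fin d → ℝ) → Matrix (Fin d) (Fin d) ℝ) (m : Fin d → ℝ) : ℝ≥0∞ :=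
  ⨅ (γ : Fin d → Fin d → ℝ)
    (_ : (∀ x y, 0 ≤ γ x y) ∧ (∀ x, (∑ y, γ x y) = m x) ∧ (∀ y, (∑ x, γ x y) = m y)),
    relEnt (fun xy : Fin d × Fin d => γ xy.1 xy.2)
      (fun xy : Fin d × Fin d => m xy.1 * G m xy.1 xy.2)

lemma lintegral_exp_neg_Ici :
    (∫⁻ s in Ici (0:ℝ), ENNReal.ofReal (Real.exp (-s))) = 1 := by
  rw [Measure.restrict_congr_set Ioi_ae_eq_Ici.symm,
    ← ofReal_integral_eq_lintegral_ofReal]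
  · rw [integral_exp_neg_Ioi_zero, ENNReal.ofReal_one]
  · exact (by simpa using exp_neg_integrableOn_Ioi 0 one_pos :
      IntegrableOn (fun x : ℝ => Real.exp (-x)) (Ioi 0))
  · exact Filter.Eventually.of_forall fun s => (Real.exp_pos _).le

/-- **(Remark 2.2.)** For any `A ∈ 𝒜`, the rate function `I` associated with `A` satisfies
`I(m) ≤ tilde I(m)` for every `m ∈ P(Δ°)`. -/
theorem rateI_le_tildeI {d : ℕ} [NeZero d]
    (G : (Fin d → ℝ) → Matrix (Fin d) (Fin d) ℝ) (hG : ∀ m ∈ PD d, IsKernel (G m))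
    (A : Matrix (Fin d) (Fin d) ℝ) (hA : MemA G A)
    (m : Fin d → ℝ) (hm : m ∈ PD d) :
    rateI A G m ≤ tildeI G m := by
  rw [tildeI]
  refine le_iInf fun γ => le_iInf fun hγ => ?_
  obtain ⟨hγpos, hγ1, hγ2⟩ := hγ
  set C := relEnt (fun xy : Fin d × Fin d => γ xy.1 xy.2)
      (fun xy : Fin d × Fin d => m xy.1 * G m xy.1 xy.2) with hC
  by_cases hCtop : C = ⊤
  · rw [hCtop]; exact le_top
  have habs : ∀ xy : Fin d × Fin d,
      m xy.1 * G m xy.1 xy.2 = 0 → γ xy.1 xy.2 = 0 := by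
    by_contra h
    exact hCtop (by rw [hC, relEnt, if_neg h])
  have γzero : ∀ x y, A x y = 0 → γ x y = 0 := fun x y h =>
    habs (x, y) (by rw [hA.2 x y h m hm, mul_zero])
  set η : ℝ → Fin d → Fin d → ℝ := fun _ => γ with hη
  set M : ℝ → Fin d → ℝ := fun _ => m with hM
  have hAdm : Admissible A G m η M := by
    constructor
    · intro x y; exact measurable_const
    · intro s _
      refine ⟨fun x y => hγpos x y, ?_⟩
      have : ∀ x, (∑ y, γ x y) = m x := hγ1
      simp only [hη, this]
      exact hm.2
    · intro x y h t _
      simp [hη, γzero x y h]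
    · exact Filter.Eventually.of_forall fun s x => by
        simp only [hη]; rw [hγ1, hγ2]
    · exact continuous_const
    · intro t _ x
      simp only [hη, hM, hγ1, intervalIntegral.integral_const, smul_eq_mul]
      ring
    · intro t _; exact hm
    · refine ⟨fun _ => γ, continuous_const, fun s t _ _ => ?_, fun t _ =>
        ⟨hγpos, hγ1, hγ2, γzero⟩⟩
      simp only [sub_self, abs_zero, Finset.sum_const_zero]
      positivity
  have hcost : cost G η M = C := by
    unfold cost
    have hre : ∀ s : ℝ,
        relEnt (fun xy : Fin d × Fin d => η s xy.1 xy.2)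
          (fun xy : Fin d × Fin d => (∑ y, η s xy.1 y) * G (M s) xy.1 xy.2) = C := by
      intro s
      show relEnt (fun xy : Fin d × Fin d => γ xy.1 xy.2)
          (fun xy : Fin d × Fin d => (∑ y, γ xy.1 y) * G m xy.1 xy.2) = C
      simp only [hγ1, hC]
    rw [lintegral_congr fun s => by rw [hre s]]
    rw [lintegral_mul_const _ (by fun_prop), lintegral_exp_neg_Ici, one_mul]
  calc rateI A G m ≤ cost G η M :=
        iInf_le_of_le η (iInf_le_of_le M (iInf_le _ hAdm))
    _ = C := hcost
end
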